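/- Lexicographic product: if (C,R) is a cyclically ordered group and (L,\leq) a totally ordered group, then the relation R' on C \times L defined by R'((c,r),(c',r'),(c'',r'')) iff (R(c,c',c'') or (c=c'\neq c'' and r<r') or (c\neq c'=c'' and r'<r'') or (c=c''\neq c' and r''<r) or (c=c'=c'' and (r<r'<r'' or r'<r''<r or r''<r<r'))) makes C \times L a cyclically ordered group. -/

import Mathlib

/-- A cyclically ordered group: a ternary relation satisfying R1-R5. -/
def IsCyclicOrder {G : Type*} [Group G] (R : G → G → G → Prop) : Prop :=
  (∀ x y z : G, R x y z → x ≠ y ∧ y ≠ z ∧ z ≠ x) ∧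
  (∀ x y z : G, x ≠ y → y ≠ z → z ≠ x → R x y z ∨ R x z y) ∧
  (∀ x y z : G, R x y z → R y z x) ∧
  (∀ x y z u : G, R x y z → R y u z → R x u z) ∧
  (∀ x y z u v : G, R x y z → R (u * x * v) (u * y * v) (u * z * v))

section Aux

variable {L : Type*} [LinearOrder L]

private lemma cyc_total (x y z : L) (hxy : x ≠ y) (hyz : y ≠ z) (hzx : z ≠ x) :
    ((x < y ∧ y < z) ∨ (y < z ∧ z < x) ∨ (z < x ∧ x < y)) ∨
    ((x < z ∧ z < y) ∨ (z < y ∧ y < x) ∨ (y < x ∧ x < z)) := by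
  rcases hxy.lt_or_gt with h1 | h1 <;> rcases hyz.lt_or_gt with h2 | h2 <;>
    rcases hzx.lt_or_gt with h3 | h3 <;> tauto

private lemma cyc_trans (x y z w : L)
    (h1 : (x < y ∧ y < z) ∨ (y < z ∧ z < x) ∨ (z < x ∧ x < y))
    (h2 : (y < w ∧ w < z) ∨ (w < z ∧ z < y) ∨ (z < y ∧ y < w)) :
    (x < w ∧ w < z) ∨ (w < z ∧ z < x) ∨ (z < x ∧ x < w) := by
  rcases h1 with ⟨a1, a2⟩ | ⟨a1, a2⟩ | ⟨a1, a2⟩ <;>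
    rcases h2 with ⟨b1, b2⟩ | ⟨b1, b2⟩ | ⟨b1, b2⟩
  · exact Or.inl ⟨a1.trans b1, b2⟩
  · exact absurd a2 (lt_asymm b2)
  · exact absurd a2 (lt_asymm b1)
  · exact Or.inr (Or.inl ⟨b2, a2⟩)
  · exact absurd a1 (lt_asymm b2)
  · exact absurd a1 (lt_asymm b1)
  · exact absurd b2 (lt_asymm (a1.trans (a2.trans b1)))
  · exact Or.inr (Or.inl ⟨b1, a1⟩)
  · exact Or.inr (Or.inr ⟨a1, a2.trans b2⟩)

private lemma lt_of_cyc_left {x y z : L}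
    (h : (x < y ∧ y < z) ∨ (y < z ∧ z < x) ∨ (z < x ∧ x < y)) (hyx : z < y) :
    z < x := by
  rcases h with ⟨a1, a2⟩ | ⟨a1, a2⟩ | ⟨a1, a2⟩
  · exact absurd a2 (lt_asymm hyx)
  · exact absurd a1 (lt_asymm hyx)
  · exact a1

private lemma lt_of_cyc_right {y w z : L}
    (h : (y < w ∧ w < z) ∨ (w < z ∧ z < y) ∨ (z < y ∧ y < w)) (hyz : y < z) :
    w < z := by
  rcases h with ⟨a1, a2⟩ | ⟨a1, a2⟩ | ⟨a1, a2⟩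
  · exact a2
  · exact absurd a2 (lt_asymm hyz)
  · exact absurd a1 (lt_asymm hyz)

end Aux

/-- The lexicographic product of a cyclically ordered group `C` and a totally
ordered group `L` is a cyclically ordered group. -/
theorem lex_product_is_cog {C : Type*} [Group C] (R : C → C → C → Prop)
    (hR : IsCyclicOrder R) (L : Type*) [Group L] [LinearOrder L]
    [CovariantClass L L (· * ·) (· < ·)]
    [CovariantClass L L (Function.swap (· * ·)) (· < ·)] :
    IsCyclicOrder (fun p q s : C × L =>
      R p.1 q.1 s.1 ∨
      (p.1 = q.1 ∧ p.1 ≠ s.1 ∧ p.2 < q.2) ∨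
      (p.1 ≠ q.1 ∧ q.1 = s.1 ∧ q.2 < s.2) ∨
      (p.1 = s.1 ∧ s.1 ≠ q.1 ∧ s.2 < p.2) ∨
      (p.1 = q.1 ∧ q.1 = s.1 ∧
        ((p.2 < q.2 ∧ q.2 < s.2) ∨ (q.2 < s.2 ∧ s.2 < p.2) ∨
          (s.2 < p.2 ∧ p.2 < q.2)))) := by
  obtain ⟨hst, htot, hcy, htr, hmul⟩ := hR
  have pne1 : ∀ (a b : C) (x y : L), a ≠ b → ((a, x) : C × L) ≠ (b, y) :=
    fun a b x y h he => h (congrArg Prod.fst he)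
  have pne2 : ∀ (a b : C) (x y : L), x ≠ y → ((a, x) : C × L) ≠ (b, y) :=
    fun a b x y h he => h (congrArg Prod.snd he)
  refine ⟨?_, ?_, ?_, ?_, ?_⟩
  · -- R1 strictness
    rintro ⟨a, x⟩ ⟨b, y⟩ ⟨c, z⟩ h
    dsimp only at h
    rcases h with h | ⟨e1, e2, l⟩ | ⟨e1, e2, l⟩ | ⟨e1, e2, l⟩ | ⟨e1, e2, hc⟩
    · obtain ⟨n1, n2, n3⟩ := hst _ _ _ h
      exact ⟨pne1 _ _ _ _ n1, pne1 _ _ _ _ n2, pne1 _ _ _ _ n3⟩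
    · subst e1
      exact ⟨pne2 _ _ _ _ l.ne, pne1 _ _ _ _ e2, pne1 _ _ _ _ e2.symm⟩
    · subst e2
      exact ⟨pne1 _ _ _ _ e1, pne2 _ _ _ _ l.ne, pne1 _ _ _ _ e1.symm⟩
    · subst e1
      exact ⟨pne1 _ _ _ _ e2, pne1 _ _ _ _ e2.symm, pne2 _ _ _ _ l.ne⟩
    · subst e1; subst e2
      rcases hc with ⟨h1, h2⟩ | ⟨h1, h2⟩ | ⟨h1, h2⟩
      · exact ⟨pne2 _ _ _ _ h1.ne, pne2 _ _ _ _ h2.ne,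
          pne2 _ _ _ _ (h1.trans h2).ne'⟩
      · exact ⟨pne2 _ _ _ _ (h1.trans h2).ne', pne2 _ _ _ _ h1.ne,
          pne2 _ _ _ _ h2.ne⟩
      · exact ⟨pne2 _ _ _ _ h2.ne, pne2 _ _ _ _ (h1.trans h2).ne',
          pne2 _ _ _ _ h1.ne⟩
  · -- R2 totality
    rintro ⟨a, x⟩ ⟨b, y⟩ ⟨c, z⟩ hpq hqs hsp
    dsimp only
    by_cases hab : a = b
    · subst hab
      have hxy : x ≠ y := fun h => hpq (by rw [h])
      by_cases hac : a = c
      · subst hac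
        have hyz : y ≠ z := fun h => hqs (by rw [h])
        have hzx : z ≠ x := fun h => hsp (by rw [h])
        rcases cyc_total x y z hxy hyz hzx with h | h
        · exact Or.inl (Or.inr (Or.inr (Or.inr (Or.inr ⟨rfl, rfl, h⟩))))
        · exact Or.inr (Or.inr (Or.inr (Or.inr (Or.inr ⟨rfl, rfl, h⟩))))
      · rcases hxy.lt_or_gt with h | h
        · exact Or.inl (Or.inr (Or.inl ⟨rfl, hac, h⟩))
        · exact Or.inr (Or.inr (Or.inr (Or.inr (Or.inl ⟨rfl, hac, h⟩))))
    · by_cases hbc : b = c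
      · subst hbc
        have hyz : y ≠ z := fun h => hqs (by rw [h])
        rcases hyz.lt_or_gt with h | h
        · exact Or.inl (Or.inr (Or.inr (Or.inl ⟨hab, rfl, h⟩)))
        · exact Or.inr (Or.inr (Or.inr (Or.inl ⟨hab, rfl, h⟩)))
      · by_cases hac : a = c
        · subst hac
          have hzx : z ≠ x := fun h => hsp (by rw [h])
          rcases hzx.lt_or_gt with h | h
          · exact Or.inl (Or.inr (Or.inr (Or.inr (Or.inl ⟨rfl, fun e => hab e, h⟩))))
          · exact Or.inr (Or.inr (Or.inl ⟨rfl, hab, h⟩))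
        · rcases htot a b c hab hbc (fun e => hac e.symm) with h | h
          · exact Or.inl (Or.inl h)
          · exact Or.inr (Or.inl h)
  · -- R3 cyclicity
    rintro ⟨a, x⟩ ⟨b, y⟩ ⟨c, z⟩ h
    dsimp only at h ⊢
    rcases h with h | ⟨e1, e2, l⟩ | ⟨e1, e2, l⟩ | ⟨e1, e2, l⟩ | ⟨e1, e2, hc⟩
    · exact Or.inl (hcy _ _ _ h)
    · exact Or.inr (Or.inr (Or.inr (Or.inl ⟨e1.symm, e2, l⟩)))
    · exact Or.inr (Or.inl ⟨e2, fun e => e1 e.symm, l⟩)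
    · exact Or.inr (Or.inr (Or.inl ⟨fun e => e2 e.symm, e1.symm, l⟩))
    · subst e1; subst e2
      rcases hc with ⟨h1, h2⟩ | ⟨h1, h2⟩ | ⟨h1, h2⟩
      · exact Or.inr (Or.inr (Or.inr (Or.inr ⟨rfl, rfl, Or.inr (Or.inr ⟨h1, h2⟩)⟩)))
      · exact Or.inr (Or.inr (Or.inr (Or.inr ⟨rfl, rfl, Or.inl ⟨h1, h2⟩⟩)))
      · exact Or.inr (Or.inr (Or.inr (Or.inr ⟨rfl, rfl, Or.inr (Or.inl ⟨h1, h2⟩)⟩)))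
  · -- R4 transitivity
    rintro ⟨a, x⟩ ⟨b, y⟩ ⟨c, z⟩ ⟨d, w⟩ h1 h2
    dsimp only at h1 h2 ⊢
    rcases h1 with h1 | ⟨e1, e2, l1⟩ | ⟨e1, e2, l1⟩ | ⟨e1, e2, l1⟩ | ⟨e1, e2, c1⟩
    · rcases h2 with h2 | ⟨f1, f2, l2⟩ | ⟨f1, f2, l2⟩ | ⟨f1, f2, l2⟩ | ⟨f1, f2, c2⟩
      · exact Or.inl (htr _ _ _ _ h1 h2)
      · subst f1; exact Or.inl h1
      · subst f2
        exact Or.inr (Or.inr (Or.inl ⟨fun e => (hst _ _ _ h1).2.2 e.symm, rfl, l2⟩))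
      · exact absurd f1 (hst _ _ _ h1).2.1
      · exact absurd (f1.trans f2) (hst _ _ _ h1).2.1
    · subst e1
      rcases h2 with h2 | ⟨f1, f2, l2⟩ | ⟨f1, f2, l2⟩ | ⟨f1, f2, l2⟩ | ⟨f1, f2, c2⟩
      · exact Or.inl h2
      · subst f1; exact Or.inr (Or.inl ⟨rfl, e2, l1.trans l2⟩)
      · subst f2
        exact Or.inr (Or.inr (Or.inl ⟨e2, rfl, l2⟩))
      · exact absurd f1 e2
      · exact absurd (f1.trans f2) e2
    · subst e2
      rcases h2 with h2 | ⟨f1, f2, l2⟩ | ⟨f1, f2, l2⟩ | ⟨f1, f2, l2⟩ | ⟨f1, f2, c2⟩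
      · exact absurd rfl (hst _ _ _ h2).2.2
      · exact absurd rfl f2
      · subst f2; exact absurd rfl f1
      · exact absurd l1 (lt_asymm l2)
      · subst f1
        exact Or.inr (Or.inr (Or.inl ⟨e1, rfl, lt_of_cyc_right c2 l1⟩))
    · subst e1
      rcases h2 with h2 | ⟨f1, f2, l2⟩ | ⟨f1, f2, l2⟩ | ⟨f1, f2, l2⟩ | ⟨f1, f2, c2⟩
      · exact Or.inr (Or.inr (Or.inr (Or.inl ⟨rfl, fun e => (hst _ _ _ h2).2.1 e.symm, l1⟩)))
      · subst f1
        exact Or.inr (Or.inr (Or.inr (Or.inl ⟨rfl, e2, l1⟩)))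
      · subst f2
        exact Or.inr (Or.inr (Or.inr (Or.inr ⟨rfl, rfl, Or.inr (Or.inl ⟨l2, l1⟩)⟩)))
      · exact absurd f1.symm e2
      · exact absurd (f1.trans f2).symm e2
    · subst e1; subst e2
      rcases h2 with h2 | ⟨f1, f2, l2⟩ | ⟨f1, f2, l2⟩ | ⟨f1, f2, l2⟩ | ⟨f1, f2, c2⟩
      · exact absurd rfl (hst _ _ _ h2).2.2
      · exact absurd rfl f2
      · subst f2; exact absurd rfl f1
      · exact Or.inr (Or.inr (Or.inr (Or.inl ⟨rfl, f2, lt_of_cyc_left c1 l2⟩)))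
      · subst f1
        exact Or.inr (Or.inr (Or.inr (Or.inr ⟨rfl, rfl, cyc_trans x y z w c1 c2⟩)))
  · -- R5 translation invariance
    have hμe : ∀ (g h u v : C), g = h → u * g * v = u * h * v := by
      intro g h u v e; rw [e]
    have hμn : ∀ (g h u v : C), g ≠ h → u * g * v ≠ u * h * v :=
      fun g h u v e he => e (mul_left_cancel (mul_right_cancel he))
    have hμl : ∀ (g h : L) (u v : L), g < h → u * g * v < u * h * v :=
      fun g h u v e => mul_lt_mul_left (mul_lt_mul_right e u) v
    rintro ⟨a, x⟩ ⟨b, y⟩ ⟨c, z⟩ ⟨u1, u2⟩ ⟨v1, v2⟩ h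
    simp only [Prod.mk_mul_mk] at h ⊢
    rcases h with h | ⟨e1, e2, l⟩ | ⟨e1, e2, l⟩ | ⟨e1, e2, l⟩ | ⟨e1, e2, hc⟩
    · exact Or.inl (hmul _ _ _ _ _ h)
    · exact Or.inr (Or.inl ⟨hμe _ _ _ _ e1, hμn _ _ _ _ e2, hμl _ _ _ _ l⟩)
    · exact Or.inr (Or.inr (Or.inl ⟨hμn _ _ _ _ e1, hμe _ _ _ _ e2, hμl _ _ _ _ l⟩))
    · exact Or.inr (Or.inr (Or.inr (Or.inl ⟨hμe _ _ _ _ e1, hμn _ _ _ _ e2, hμl _ _ _ _ l⟩)))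
    · refine Or.inr (Or.inr (Or.inr (Or.inr ⟨hμe _ _ _ _ e1, hμe _ _ _ _ e2, ?_⟩)))
      rcases hc with ⟨h1, h2⟩ | ⟨h1, h2⟩ | ⟨h1, h2⟩
      · exact Or.inl ⟨hμl _ _ _ _ h1, hμl _ _ _ _ h2⟩
      · exact Or.inr (Or.inl ⟨hμl _ _ _ _ h1, hμl _ _ _ _ h2⟩)
      · exact Or.inr (Or.inr ⟨hμl _ _ _ _ h1, hμl _ _ _ _ h2⟩)
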